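/- If G is a gate obtained from a gate H using disjoint cliques C and C' of H and a chordless path P:(v_1,...,v_l) disjoint from H, then the maximal cliques of G are exactly: the maximal cliques of H other than C and C'; the sets {v_i, v_{i+1}} for 1 ≤ i ≤ l−1; the set C ∪ {v_1}; and the set C' ∪ {v_l}. -/

import Mathlib

/-- A maximal clique (a maximal complete vertex set) of a simple graph. -/
def IsMaxClique {V : Type} (G : SimpleGraph V) (s : Set V) : Prop :=
  G.IsClique s ∧ ∀ t : Set V, G.IsClique t → s ⊆ t → s = t

/-- The number of maximal cliques of a graph. -/
noncomputable def numMaxCliques {V : Type} (G : SimpleGraph V) : ℕ :=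
  {s : Set V | IsMaxClique G s}.ncard

/-- The graph obtained from `G` and a chordless path on `l` new vertices by joining the
first vertex of the path to every vertex of `A` and the last vertex to every vertex of `B`. -/
def joinPath {V : Type} (G : SimpleGraph V) (A B : Set V) (l : ℕ) :
    SimpleGraph (V ⊕ Fin l) where
  Adj x y :=
    match x, y with
    | Sum.inl a, Sum.inl b => G.Adj a b
    | Sum.inl a, Sum.inr i => (i.val = 0 ∧ a ∈ A) ∨ (i.val = l - 1 ∧ a ∈ B)
    | Sum.inr i, Sum.inl a => (i.val = 0 ∧ a ∈ A) ∨ (i.val = l - 1 ∧ a ∈ B)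
    | Sum.inr i, Sum.inr j => i.val + 1 = j.val ∨ j.val + 1 = i.val
  symm :=
    ⟨by rintro (a | i) (b | j) h <;> simp_all <;> tauto⟩
  loopless := ⟨by
    rintro (a | i) h
    · exact G.loopless.irrefl a h
    · rcases h with h | h <;> omega⟩

/-- Gates, defined recursively (up to isomorphism): chordless cycles `Cₙ`, `n ≥ 4`, are
gates, and joining a new chordless path to two disjoint maximal cliques of a gate
yields a gate. -/
inductive IsGate : {V : Type} → SimpleGraph V → Prop
  | cycle (n : ℕ) (hn : 4 ≤ n) : IsGate (SimpleGraph.cycleGraph n)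
  | extend {V : Type} (G : SimpleGraph V) (C C' : Set V) (l : ℕ)
      (hG : IsGate G) (hC : IsMaxClique G C) (hC' : IsMaxClique G C')
      (hdisj : Disjoint C C') (hl : 2 ≤ l) : IsGate (joinPath G C C' l)
  | iso {V W : Type} (G : SimpleGraph V) (H : SimpleGraph W)
      (hG : IsGate G) (e : G ≃g H) : IsGate H

/-- An EPT representation of `G`: a family of paths in a host tree such that two distinct
vertices are adjacent iff their paths share an edge of the tree. -/
structure EPTRep {V : Type} (G : SimpleGraph V) where
  VT : Type
  T : SimpleGraph VT
  tree : T.IsTree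
  src : V → VT
  tgt : V → VT
  walk : (v : V) → T.Walk (src v) (tgt v)
  isPath : ∀ v, (walk v).IsPath
  adj_iff : ∀ v w : V, v ≠ w →
    (G.Adj v w ↔ ∃ e : Sym2 VT, e ∈ (walk v).edges ∧ e ∈ (walk w).edges)

/-- The edge set of the path representing `v`. -/
def EPTRep.edges {V : Type} {G : SimpleGraph V} (R : EPTRep G) (v : V) :
    Set (Sym2 R.VT) := {e | e ∈ (R.walk v).edges}

/-- The representation is Helly: every nonempty pairwise edge-intersecting subfamily of
paths has a common edge. -/
def EPTRep.Helly {V : Type} {G : SimpleGraph V} (R : EPTRep G) : Prop :=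
  ∀ S : Set V, S.Nonempty →
    (∀ u ∈ S, ∀ v ∈ S, (R.edges u ∩ R.edges v).Nonempty) →
    (⋂ v ∈ S, R.edges v).Nonempty

/-- The host tree has maximum degree at most `h`. -/
def EPTRep.maxDegLE {V : Type} {G : SimpleGraph V} (R : EPTRep G) (h : ℕ) : Prop :=
  ∀ x : R.VT, (R.T.neighborSet x).ncard ≤ h

/-- The class `[h,2,2]`. -/
def InEPTClass (h : ℕ) {V : Type} (G : SimpleGraph V) : Prop :=
  ∃ R : EPTRep G, R.maxDegLE h

/-- Helly EPT graphs. -/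
def IsHellyEPT {V : Type} (G : SimpleGraph V) : Prop :=
  ∃ R : EPTRep G, R.Helly

/-- The class Helly `[h,2,2]`. -/
def InHellyClass (h : ℕ) {V : Type} (G : SimpleGraph V) : Prop :=
  ∃ R : EPTRep G, R.Helly ∧ R.maxDegLE h

/-- Three paths of the representation form a claw at some claw of the host tree. -/
def EPTRep.FormsClaw {V : Type} {G : SimpleGraph V} (R : EPTRep G) (a b c : V) : Prop :=
  ∃ q x y z : R.VT, R.T.Adj q x ∧ R.T.Adj q y ∧ R.T.Adj q z ∧
    x ≠ y ∧ y ≠ z ∧ x ≠ z ∧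
    s(q, x) ∈ R.edges a ∧ s(q, y) ∈ R.edges a ∧
    s(q, y) ∈ R.edges b ∧ s(q, z) ∈ R.edges b ∧
    s(q, x) ∈ R.edges c ∧ s(q, z) ∈ R.edges c

/-- A multipie of size `k` whose paths are those representing the vertices in `S`. -/
def IsMultipie {V : Type} {G : SimpleGraph V} (R : EPTRep G) (k : ℕ) (S : Set V) : Prop :=
  ∃ (q : R.VT) (qi : Fin k → R.VT), Function.Injective qi ∧
    (∀ i, R.T.Adj q (qi i)) ∧
    (∀ v ∈ S, {i : Fin k | qi i ∈ (R.walk v).support}.ncard = 2) ∧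
    (∀ u ∈ S, ∀ v ∈ S, ∀ i j : Fin k, i ≠ j →
      qi i ∈ (R.walk u).support → qi j ∈ (R.walk u).support →
      qi i ∈ (R.walk v).support → qi j ∈ (R.walk v).support → u = v) ∧
    (∀ i, 2 ≤ {v ∈ S | s(q, qi i) ∈ R.edges v}.ncard) ∧
    (∀ a ∈ S, ∀ b ∈ S, ∀ c ∈ S, ¬ R.FormsClaw a b c)

/-- The next index around a cycle. -/
def finNext {k : ℕ} (hk : 0 < k) (i : Fin k) : Fin k :=
  ⟨(i.val + 1) % k, Nat.mod_lt _ hk⟩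

/-- `G` has a clique separator: a complete vertex set whose removal disconnects the graph. -/
def HasCliqueSep {V : Type} (G : SimpleGraph V) : Prop :=
  ∃ C : Set V, G.IsClique C ∧ ¬ (G.induce Cᶜ).Preconnected

/-- An atom of `G`: a maximal vertex subset inducing a connected subgraph without clique
separators. -/
def IsAtomOf {V : Type} (G : SimpleGraph V) (A : Set V) : Prop :=
  (G.induce A).Connected ∧ ¬ HasCliqueSep (G.induce A) ∧
    ∀ B : Set V, A ⊆ B → (G.induce B).Connected → ¬ HasCliqueSep (G.induce B) → A = B


section StmtOneHelpers

lemma jp_adj_inl_inl' {V : Type} {G : SimpleGraph V} {A B : Set V} {l : ℕ} {a b : V} :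
    (joinPath G A B l).Adj (Sum.inl a) (Sum.inl b) ↔ G.Adj a b := Iff.rfl

lemma jp_adj_inl_inr' {V : Type} {G : SimpleGraph V} {A B : Set V} {l : ℕ} {a : V} {i : Fin l} :
    (joinPath G A B l).Adj (Sum.inl a) (Sum.inr i) ↔
      ((i.val = 0 ∧ a ∈ A) ∨ (i.val = l - 1 ∧ a ∈ B)) := Iff.rfl

lemma jp_adj_inr_inl' {V : Type} {G : SimpleGraph V} {A B : Set V} {l : ℕ} {a : V} {i : Fin l} :
    (joinPath G A B l).Adj (Sum.inr i) (Sum.inl a) ↔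
      ((i.val = 0 ∧ a ∈ A) ∨ (i.val = l - 1 ∧ a ∈ B)) := Iff.rfl

lemma jp_adj_inr_inr' {V : Type} {G : SimpleGraph V} {A B : Set V} {l : ℕ} {i j : Fin l} :
    (joinPath G A B l).Adj (Sum.inr i) (Sum.inr j) ↔
      (i.val + 1 = j.val ∨ j.val + 1 = i.val) := Iff.rfl

lemma gate_nonempty' {V : Type} {G : SimpleGraph V} (h : IsGate G) : Nonempty V := by
  induction h with
  | cycle n hn => exact ⟨⟨0, by omega⟩⟩
  | extend G C C' l hG hC hC' hdisj hl ih => exact ⟨Sum.inr ⟨0, by omega⟩⟩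
  | iso G H hG e ih => exact ⟨e ih.some⟩

lemma maxClique_nonempty' {V : Type} (hV : Nonempty V) {G : SimpleGraph V} {C : Set V}
    (h : IsMaxClique G C) : C.Nonempty := by
  obtain ⟨v⟩ := hV
  rcases Set.eq_empty_or_nonempty C with hc | hc
  · have heq := h.2 {v} (Set.pairwise_singleton v G.Adj)
      (by rw [hc]; exact Set.empty_subset _)
    exact ⟨v, by rw [heq]; rfl⟩
  · exact hc

end StmtOneHelpers

theorem stmt1 {V : Type} (G : SimpleGraph V) (C C' : Set V) (l : ℕ)
    (hG : IsGate G) (hC : IsMaxClique G C) (hC' : IsMaxClique G C')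
    (hdisj : Disjoint C C') (hl : 2 ≤ l) (s : Set (V ⊕ Fin l)) :
    IsMaxClique (joinPath G C C' l) s ↔
      ((∃ D : Set V, IsMaxClique G D ∧ D ≠ C ∧ D ≠ C' ∧ s = Sum.inl '' D) ∨
       (∃ i : ℕ, ∃ hi : i + 1 < l, s = {Sum.inr ⟨i, by omega⟩, Sum.inr ⟨i + 1, hi⟩}) ∨
       (s = Sum.inl '' C ∪ {Sum.inr ⟨0, by omega⟩}) ∨
       (s = Sum.inl '' C' ∪ {Sum.inr ⟨l - 1, by omega⟩})) := by
  have hV : Nonempty V := gate_nonempty' hG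
  have hCne : C.Nonempty := maxClique_nonempty' hV hC
  have hC'ne : C'.Nonempty := maxClique_nonempty' hV hC'
  -- image of a clique is a clique
  have himg : ∀ D : Set V, G.IsClique D → (joinPath G C C' l).IsClique (Sum.inl '' D) := by
    rintro D hD x ⟨a, ha, rfl⟩ y ⟨b, hb, rfl⟩ hxy
    exact hD ha hb (fun h => hxy (congrArg Sum.inl h))
  -- cliques in the extended graph
  have hcl0 : (joinPath G C C' l).IsClique (Sum.inl '' C ∪ {Sum.inr ⟨0, by omega⟩}) := by
    rintro x (⟨a, ha, rfl⟩ | hx) y (⟨b, hb, rfl⟩ | hy) hxy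
    · exact hC.1 ha hb (fun h => hxy (congrArg Sum.inl h))
    · rw [Set.mem_singleton_iff] at hy; subst hy
      exact Or.inl ⟨rfl, ha⟩
    · rw [Set.mem_singleton_iff] at hx; subst hx
      exact Or.inl ⟨rfl, hb⟩
    · rw [Set.mem_singleton_iff] at hx hy; subst hx; subst hy; exact absurd rfl hxy
  have hcl1 : (joinPath G C C' l).IsClique (Sum.inl '' C' ∪ {Sum.inr ⟨l - 1, by omega⟩}) := by
    rintro x (⟨a, ha, rfl⟩ | hx) y (⟨b, hb, rfl⟩ | hy) hxy
    · exact hC'.1 ha hb (fun h => hxy (congrArg Sum.inl h))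
    · rw [Set.mem_singleton_iff] at hy; subst hy
      exact Or.inr ⟨rfl, ha⟩
    · rw [Set.mem_singleton_iff] at hx; subst hx
      exact Or.inr ⟨rfl, hb⟩
    · rw [Set.mem_singleton_iff] at hx hy; subst hx; subst hy; exact absurd rfl hxy
  have hclpair : ∀ (i j : Fin l), i.val + 1 = j.val →
      (joinPath G C C' l).IsClique {Sum.inr i, Sum.inr j} := by
    intro i j hij x hx y hy hxy
    simp only [Set.mem_insert_iff, Set.mem_singleton_iff] at hx hy
    rcases hx with rfl | rfl <;> rcases hy with rfl | rfl
    · exact absurd rfl hxy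
    · exact Or.inl hij
    · exact Or.inr hij
    · exact absurd rfl hxy
  -- maximality of C ∪ {v₁}
  have hmax0 : IsMaxClique (joinPath G C C' l)
      (Sum.inl '' C ∪ {Sum.inr ⟨0, by omega⟩}) := by
    refine ⟨hcl0, ?_⟩
    intro t ht hsub
    refine Set.Subset.antisymm hsub ?_
    intro x hx
    cases x with
    | inl a =>
      refine Set.mem_union_left _ ⟨a, ?_, rfl⟩
      have htl : G.IsClique {b | Sum.inl b ∈ t} :=
        fun b hb c hc hbc => ht hb hc (fun h => hbc (Sum.inl.inj h))
      have heq := hC.2 _ htl (fun b hb => hsub (Set.mem_union_left _ ⟨b, hb, rfl⟩))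
      rw [heq]; exact hx
    | inr j =>
      refine Set.mem_union_right _ ?_
      by_contra hj
      obtain ⟨a, haC⟩ := hCne
      have hat : Sum.inl a ∈ t := hsub (Set.mem_union_left _ ⟨a, haC, rfl⟩)
      have hadj := ht hx hat (by simp)
      rw [jp_adj_inr_inl'] at hadj
      rcases hadj with ⟨hj0, _⟩ | ⟨_, haC'⟩
      · exact hj (congrArg Sum.inr (Fin.ext hj0))
      · exact Set.disjoint_left.mp hdisj haC haC'
  -- maximality of C' ∪ {v_l}
  have hmax1 : IsMaxClique (joinPath G C C' l)
      (Sum.inl '' C' ∪ {Sum.inr ⟨l - 1, by omega⟩}) := by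
    refine ⟨hcl1, ?_⟩
    intro t ht hsub
    refine Set.Subset.antisymm hsub ?_
    intro x hx
    cases x with
    | inl a =>
      refine Set.mem_union_left _ ⟨a, ?_, rfl⟩
      have htl : G.IsClique {b | Sum.inl b ∈ t} :=
        fun b hb c hc hbc => ht hb hc (fun h => hbc (Sum.inl.inj h))
      have heq := hC'.2 _ htl (fun b hb => hsub (Set.mem_union_left _ ⟨b, hb, rfl⟩))
      rw [heq]; exact hx
    | inr j =>
      refine Set.mem_union_right _ ?_
      by_contra hj
      obtain ⟨a, haC'⟩ := hC'ne
      have hat : Sum.inl a ∈ t := hsub (Set.mem_union_left _ ⟨a, haC', rfl⟩)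
      have hadj := ht hx hat (by simp)
      rw [jp_adj_inr_inl'] at hadj
      rcases hadj with ⟨_, haC⟩ | ⟨hj1, _⟩
      · exact Set.disjoint_left.mp hdisj haC haC'
      · exact hj (congrArg Sum.inr (Fin.ext hj1))
  -- maximality of the pair cliques
  have hmaxpair : ∀ (i j : Fin l), i.val + 1 = j.val →
      IsMaxClique (joinPath G C C' l) {Sum.inr i, Sum.inr j} := by
    intro i j hij
    refine ⟨hclpair i j hij, ?_⟩
    intro t ht hsub
    refine Set.Subset.antisymm hsub ?_
    intro x hx
    have hit : Sum.inr i ∈ t := hsub (Set.mem_insert _ _)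
    have hjt : Sum.inr j ∈ t := hsub (Set.mem_insert_of_mem _ rfl)
    cases x with
    | inl a =>
      exfalso
      have h1 := ht hx hit (by simp)
      have h2 := ht hx hjt (by simp)
      rw [jp_adj_inl_inr'] at h1 h2
      have hjl : j.val < l := j.isLt
      rcases h1 with ⟨hi0, haC⟩ | ⟨hi1, _⟩
      · rcases h2 with ⟨hj0, _⟩ | ⟨_, haC'⟩
        · omega
        · exact Set.disjoint_left.mp hdisj haC haC'
      · omega
    | inr k =>
      by_cases hkm : k = i
      · exact Set.mem_insert_iff.mpr (Or.inl (congrArg Sum.inr hkm))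
      by_cases hkm1 : k = j
      · exact Set.mem_insert_iff.mpr (Or.inr (congrArg Sum.inr hkm1))
      exfalso
      have h1 := ht hx hit (fun h => hkm (Sum.inr.inj h))
      have h2 := ht hx hjt (fun h => hkm1 (Sum.inr.inj h))
      rw [jp_adj_inr_inr'] at h1 h2
      have hk1 : k.val ≠ i.val := fun h => hkm (Fin.ext h)
      have hk2 : k.val ≠ j.val := fun h => hkm1 (Fin.ext h)
      omega
  -- maximality of old maximal cliques other than C, C'
  have hmaxD : ∀ D : Set V, IsMaxClique G D → D ≠ C → D ≠ C' →
      IsMaxClique (joinPath G C C' l) (Sum.inl '' D) := by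
    intro D hD hne1 hne2
    refine ⟨himg D hD.1, ?_⟩
    intro t ht hsub
    have hDne : D.Nonempty := maxClique_nonempty' hV hD
    have htl : G.IsClique {b | Sum.inl b ∈ t} :=
      fun b hb c hc hbc => ht hb hc (fun h => hbc (Sum.inl.inj h))
    have hDeq : D = {b | Sum.inl b ∈ t} :=
      hD.2 _ htl (fun b hb => hsub ⟨b, hb, rfl⟩)
    refine Set.Subset.antisymm hsub ?_
    intro x hx
    cases x with
    | inl a => exact ⟨a, by rw [hDeq]; exact hx, rfl⟩
    | inr j =>
      exfalso
      obtain ⟨a, haD⟩ := hDne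
      have h1 := ht hx (hsub ⟨a, haD, rfl⟩) (by simp)
      rw [jp_adj_inr_inl'] at h1
      rcases h1 with ⟨hj0, _⟩ | ⟨hj1, _⟩
      · have hDC : D ⊆ C := by
          intro b hb
          have h2 := ht hx (hsub ⟨b, hb, rfl⟩) (by simp)
          rw [jp_adj_inr_inl'] at h2
          rcases h2 with ⟨_, hbC⟩ | ⟨hj1, _⟩
          · exact hbC
          · omega
        exact hne1 (hD.2 C hC.1 hDC)
      · have hDC' : D ⊆ C' := by
          intro b hb
          have h2 := ht hx (hsub ⟨b, hb, rfl⟩) (by simp)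
          rw [jp_adj_inr_inl'] at h2
          rcases h2 with ⟨hj0, _⟩ | ⟨_, hbC'⟩
          · omega
          · exact hbC'
        exact hne2 (hD.2 C' hC'.1 hDC')
  constructor
  · rintro ⟨hs, hmax⟩
    by_cases hE : ∀ i : Fin l, Sum.inr i ∉ s
    · left
      have hsD : s = Sum.inl '' {a | Sum.inl a ∈ s} := by
        ext x
        cases x with
        | inl a => simp
        | inr i => simp [hE i]
      have hDcl : G.IsClique {a | Sum.inl a ∈ s} :=
        fun a ha b hb hab => hs ha hb (fun h => hab (Sum.inl.inj h))
      refine ⟨{a | Sum.inl a ∈ s}, ⟨hDcl, ?_⟩, ?_, ?_, hsD⟩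
      · intro t ht hsub
        have heq := hmax (Sum.inl '' t) (himg t ht)
          (by rw [hsD]; exact Set.image_mono hsub)
        ext a
        constructor
        · exact fun h => hsub h
        · intro hat
          show Sum.inl a ∈ s
          rw [heq]; exact ⟨a, hat, rfl⟩
      · intro hDC
        have hsub : s ⊆ Sum.inl '' C ∪ {Sum.inr ⟨0, by omega⟩} := by
          rw [hsD, hDC]; exact Set.subset_union_left
        have heq := hmax _ hcl0 hsub
        exact hE _ (by rw [heq]; exact Set.mem_union_right _ rfl)
      · intro hDC'
        have hsub : s ⊆ Sum.inl '' C' ∪ {Sum.inr ⟨l - 1, by omega⟩} := by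
          rw [hsD, hDC']; exact Set.subset_union_left
        have heq := hmax _ hcl1 hsub
        exact hE _ (by rw [heq]; exact Set.mem_union_right _ rfl)
    · push_neg at hE
      obtain ⟨i, hi⟩ := hE
      by_cases hE2 : ∃ j : Fin l, j ≠ i ∧ Sum.inr j ∈ s
      · obtain ⟨j, hji, hj⟩ := hE2
        right; left
        have hadj := hs hj hi (fun h => hji (Sum.inr.inj h))
        rw [jp_adj_inr_inr'] at hadj
        obtain ⟨m, m1, hm, hm1, hmm⟩ : ∃ m m1 : Fin l,
            Sum.inr m ∈ s ∧ Sum.inr m1 ∈ s ∧ m.val + 1 = m1.val := by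
          rcases hadj with h | h
          · exact ⟨j, i, hj, hi, h⟩
          · exact ⟨i, j, hi, hj, h⟩
        have hm1lt : m.val + 1 < l := hmm ▸ m1.isLt
        refine ⟨m.val, hm1lt, ?_⟩
        have hsub : s ⊆ {Sum.inr m, Sum.inr m1} := by
          intro x hx
          cases x with
          | inl a =>
            exfalso
            have h1 := hs hx hm (by simp)
            have h2 := hs hx hm1 (by simp)
            rw [jp_adj_inl_inr'] at h1 h2
            rcases h1 with ⟨h10, haC⟩ | ⟨h11, _⟩
            · rcases h2 with ⟨h20, _⟩ | ⟨_, haC'⟩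
              · omega
              · exact Set.disjoint_left.mp hdisj haC haC'
            · omega
          | inr k =>
            by_cases hkm : k = m
            · exact Set.mem_insert_iff.mpr (Or.inl (congrArg Sum.inr hkm))
            by_cases hkm1 : k = m1
            · exact Set.mem_insert_iff.mpr (Or.inr (congrArg Sum.inr hkm1))
            exfalso
            have h1 := hs hx hm (fun h => hkm (Sum.inr.inj h))
            have h2 := hs hx hm1 (fun h => hkm1 (Sum.inr.inj h))
            rw [jp_adj_inr_inr'] at h1 h2
            have hk1 : k.val ≠ m.val := fun h => hkm (Fin.ext h)
            have hk2 : k.val ≠ m1.val := fun h => hkm1 (Fin.ext h)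
            omega
        have heq := hmax _ (hclpair m m1 hmm) hsub
        have e2 : m1 = (⟨m.val + 1, hm1lt⟩ : Fin l) := Fin.ext hmm.symm
        rw [heq, e2]
      · push_neg at hE2
        by_cases h0 : i.val = 0
        · right; right; left
          have hsub : s ⊆ Sum.inl '' C ∪ {Sum.inr ⟨0, by omega⟩} := by
            intro x hx
            cases x with
            | inl a =>
              have h1 := hs hx hi (by simp)
              rw [jp_adj_inl_inr'] at h1
              rcases h1 with ⟨_, haC⟩ | ⟨h11, _⟩
              · exact Set.mem_union_left _ ⟨a, haC, rfl⟩
              · omega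
            | inr k =>
              have hki : k = i := by by_contra h; exact hE2 k h hx
              refine Set.mem_union_right _ ?_
              have hk0 : k = (⟨0, by omega⟩ : Fin l) := hki.trans (Fin.ext h0)
              exact congrArg Sum.inr hk0
          exact hmax _ hcl0 hsub
        · by_cases h1 : i.val = l - 1
          · right; right; right
            have hsub : s ⊆ Sum.inl '' C' ∪ {Sum.inr ⟨l - 1, by omega⟩} := by
              intro x hx
              cases x with
              | inl a =>
                have h2 := hs hx hi (by simp)
                rw [jp_adj_inl_inr'] at h2
                rcases h2 with ⟨h20, _⟩ | ⟨_, haC'⟩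
                · omega
                · exact Set.mem_union_left _ ⟨a, haC', rfl⟩
              | inr k =>
                have hki : k = i := by by_contra h; exact hE2 k h hx
                refine Set.mem_union_right _ ?_
                have hk1 : k = (⟨l - 1, by omega⟩ : Fin l) := hki.trans (Fin.ext h1)
                exact congrArg Sum.inr hk1
            exact hmax _ hcl1 hsub
          · exfalso
            have hil : i.val < l := i.isLt
            have hnext : i.val + 1 < l := by omega
            have hsub : s ⊆ {Sum.inr i, Sum.inr ⟨i.val + 1, hnext⟩} := by
              intro x hx
              cases x with
              | inl a =>
                have ha := hs hx hi (by simp)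
                rw [jp_adj_inl_inr'] at ha
                rcases ha with ⟨h, _⟩ | ⟨h, _⟩ <;> omega
              | inr k =>
                have hki : k = i := by by_contra h; exact hE2 k h hx
                exact Set.mem_insert_iff.mpr (Or.inl (congrArg Sum.inr hki))
            have heq := hmax _ (hclpair i ⟨i.val + 1, hnext⟩ rfl) hsub
            have hmem : Sum.inr (⟨i.val + 1, hnext⟩ : Fin l) ∈ s := by
              rw [heq]; exact Set.mem_insert_of_mem _ rfl
            have hne : (⟨i.val + 1, hnext⟩ : Fin l) ≠ i := by
              intro h
              have : i.val + 1 = i.val := congrArg Fin.val h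
              omega
            exact hE2 _ hne hmem
  · rintro (⟨D, hD, hDC, hDC', rfl⟩ | ⟨i, hilt, rfl⟩ | rfl | rfl)
    · exact hmaxD D hD hDC hDC'
    · exact hmaxpair ⟨i, by omega⟩ ⟨i + 1, hilt⟩ rfl
    · exact hmax0
    · exact hmax1
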